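/- Let ρ be a density operator on H_anc ⊗ H and F a positive semidefinite operator on H_anc ⊗ K. For any positive semidefinite operators M₁, M₂ on H with M₁ + M₂ = I, if tr[(id ⊗ 𝓜₁₂)(ρ) F] = 1 and tr[(id ⊗ 𝓜₂₁)(ρ) F] = 0, where 𝓜_{jk}(σ) = tr(σMⱼ)|1⟩⟨1| + tr(σMₖ)|2⟩⟨2| for K = ℂ², then there exists a unit vector in the kernel of M₁ or of M₂. -/

import Mathlib

open scoped ComplexOrder
/-- The extension `id ⊗ 𝓜` of the measure-and-prepare channel
`𝓜(σ) = tr(σ N₀)|1⟩⟨1| + tr(σ N₁)|2⟩⟨2|` to an ancilla of dimension `a`,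
acting on a bipartite state `ρ` on `H_anc ⊗ H`. -/
noncomputable def extMeasurePrepare (a d : ℕ) (N : Fin 2 → Matrix (Fin d) (Fin d) ℂ)
    (ρ : Matrix (Fin a × Fin d) (Fin a × Fin d) ℂ) :
    Matrix (Fin a × Fin 2) (Fin a × Fin 2) ℂ :=
  Matrix.of fun p q =>
    if p.2 = q.2 then
      Matrix.trace ((Matrix.of fun s t => ρ (p.1, s) (q.1, t)) * N p.2)
    else 0

open Matrix

open scoped MatrixOrder in
noncomputable def Matrix.PosSemidef.sqrt {n : Type*} [Fintype n] [DecidableEq n]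
    {P : Matrix n n ℂ} (_hP : P.PosSemidef) : Matrix n n ℂ := CFC.sqrt P

open scoped MatrixOrder in
lemma Matrix.PosSemidef.sqrt_mul_self {n : Type*} [Fintype n] [DecidableEq n]
    {P : Matrix n n ℂ} (hP : P.PosSemidef) : hP.sqrt * hP.sqrt = P :=
  CFC.sqrt_mul_sqrt_self P hP.nonneg

open scoped MatrixOrder in
lemma Matrix.PosSemidef.posSemidef_sqrt {n : Type*} [Fintype n] [DecidableEq n]
    {P : Matrix n n ℂ} (hP : P.PosSemidef) : hP.sqrt.PosSemidef :=
  (CFC.sqrt_nonneg P).posSemidef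

private lemma quad_of_diag {n : Type*} [Fintype n] {R : Matrix n n ℂ} (hR : R.IsHermitian)
    (X : Matrix n n ℂ) (s : n) :
    (R * X * R) s s = star (fun t => R t s) ⬝ᵥ X *ᵥ (fun t => R t s) := by
  simp only [Matrix.mul_apply, dotProduct, mulVec, Pi.star_apply, Finset.sum_mul, Finset.mul_sum]
  rw [Finset.sum_comm]
  refine Finset.sum_congr rfl fun t _ => Finset.sum_congr rfl fun u _ => ?_
  rw [hR.apply s t]
  ring

private lemma trace_sqrt_quad {n : Type*} [Fintype n] [DecidableEq n]
    {P : Matrix n n ℂ} (hP : P.PosSemidef) (Q : Matrix n n ℂ) :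
    (P * Q).trace = ∑ s, star (fun t => hP.sqrt t s) ⬝ᵥ Q *ᵥ (fun t => hP.sqrt t s) := by
  have h1 : (hP.sqrt * Q * hP.sqrt).trace = (P * Q).trace := by
    rw [trace_mul_cycle, hP.sqrt_mul_self]
  rw [← h1]
  simp only [Matrix.trace, Matrix.diag]
  exact Finset.sum_congr rfl fun s _ => quad_of_diag hP.posSemidef_sqrt.1 Q s

private lemma trace_nonneg' {n : Type*} [Fintype n] [DecidableEq n]
    {P Q : Matrix n n ℂ} (hP : P.PosSemidef)
    (hQ : ∀ v, 0 ≤ star v ⬝ᵥ Q *ᵥ v) : 0 ≤ (P * Q).trace := by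
  rw [trace_sqrt_quad hP Q]
  exact Finset.sum_nonneg fun s _ => hQ _

private lemma quad_col_zero {n : Type*} [Fintype n] [DecidableEq n]
    {P Q : Matrix n n ℂ} (hP : P.PosSemidef)
    (hQ : ∀ v, 0 ≤ star v ⬝ᵥ Q *ᵥ v) (h : (P * Q).trace = 0) (s : n) :
    star (fun t => hP.sqrt t s) ⬝ᵥ Q *ᵥ (fun t => hP.sqrt t s) = 0 := by
  rw [trace_sqrt_quad hP Q] at h
  exact (Finset.sum_eq_zero_iff_of_nonneg (fun s _ => hQ _)).mp h s (Finset.mem_univ s)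

/-- If `tr(PQ) = 0` with `P, Q` PSD and `Q` injective, then `P = 0`. -/
private lemma eq_zero_of_trace_mul {n : Type*} [Fintype n] [DecidableEq n]
    {P Q : Matrix n n ℂ} (hP : P.PosSemidef) (hQ : Q.PosSemidef)
    (hinj : ∀ v, Q *ᵥ v = 0 → v = 0) (h : (P * Q).trace = 0) : P = 0 := by
  have hcol : ∀ s, (fun t => hP.sqrt t s) = 0 := fun s =>
    hinj _ ((hQ.dotProduct_mulVec_zero_iff _).mp (quad_col_zero hP hQ.dotProduct_mulVec_nonneg h s))
  have hs : hP.sqrt = 0 := by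
    ext t s
    exact congrFun (hcol s) t
  rw [← hP.sqrt_mul_self, hs, mul_zero]

private lemma trace_transfer {n : Type*} [Fintype n] [DecidableEq n]
    {G X₁ X₂ : Matrix n n ℂ} (hG : G.PosSemidef)
    (hX₂ : ∀ v, 0 ≤ star v ⬝ᵥ X₂ *ᵥ v)
    (key : ∀ w, star w ⬝ᵥ X₂ *ᵥ w = 0 → star w ⬝ᵥ X₁ *ᵥ w = 0)
    (h : (G * X₂).trace = 0) : (G * X₁).trace = 0 := by
  rw [trace_sqrt_quad hG X₁]
  exact Finset.sum_eq_zero fun s _ => key _ (quad_col_zero hG hX₂ h s)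

private noncomputable def XMat (a d : ℕ) (ρ : Matrix (Fin a × Fin d) (Fin a × Fin d) ℂ)
    (N : Matrix (Fin d) (Fin d) ℂ) : Matrix (Fin a) (Fin a) ℂ :=
  Matrix.of fun i j => Matrix.trace ((Matrix.of fun s t => ρ (i, s) (j, t)) * N)

private noncomputable def GMat (a : ℕ) (F : Matrix (Fin a × Fin 2) (Fin a × Fin 2) ℂ)
    (k : Fin 2) : Matrix (Fin a) (Fin a) ℂ :=
  Matrix.of fun i j => F (i, k) (j, k)

private noncomputable def VMat (a d : ℕ) (w : Fin a → ℂ) :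
    Matrix (Fin a × Fin d) (Fin d) ℂ :=
  Matrix.of fun p t => if p.2 = t then w p.1 else 0

private noncomputable def EMat (a : ℕ) (k : Fin 2) :
    Matrix (Fin a × Fin 2) (Fin a) ℂ :=
  Matrix.of fun p i => if p.1 = i ∧ p.2 = k then 1 else 0

private lemma GMat_eq (a : ℕ) (F : Matrix (Fin a × Fin 2) (Fin a × Fin 2) ℂ) (k : Fin 2) :
    GMat a F k = (EMat a k)ᴴ * F * (EMat a k) := by
  ext i j
  simp [GMat, EMat, Matrix.mul_apply, conjTranspose_apply, Fintype.sum_prod_type,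
    apply_ite (star : ℂ → ℂ), ite_and, Finset.sum_ite_eq, Finset.sum_ite_eq']

private lemma trace_formula (a d : ℕ) (N : Fin 2 → Matrix (Fin d) (Fin d) ℂ)
    (ρ : Matrix (Fin a × Fin d) (Fin a × Fin d) ℂ)
    (F : Matrix (Fin a × Fin 2) (Fin a × Fin 2) ℂ) :
    (extMeasurePrepare a d N ρ * F).trace
      = ∑ k : Fin 2, (XMat a d ρ (N k) * GMat a F k).trace := by
  simp only [Matrix.trace, Matrix.diag, Matrix.mul_apply, extMeasurePrepare, XMat, GMat,
    Matrix.of_apply, Fintype.sum_prod_type, ite_mul, zero_mul, Finset.sum_ite_eq,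
    Finset.sum_ite_eq', Finset.mem_univ, if_true]
  rw [Finset.sum_comm]

private lemma sum4_comm {α β γ δ M : Type*} [Fintype α] [Fintype β] [Fintype γ] [Fintype δ]
    [AddCommMonoid M] (f : α → β → γ → δ → M) :
    ∑ i, ∑ j, ∑ s, ∑ t, f i j s t = ∑ s, ∑ t, ∑ j, ∑ i, f i j s t :=
  calc ∑ i, ∑ j, ∑ s, ∑ t, f i j s t
      = ∑ i, ∑ s, ∑ j, ∑ t, f i j s t := Finset.sum_congr rfl fun _ _ => Finset.sum_comm
    _ = ∑ s, ∑ i, ∑ j, ∑ t, f i j s t := Finset.sum_comm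
    _ = ∑ s, ∑ i, ∑ t, ∑ j, f i j s t :=
        Finset.sum_congr rfl fun _ _ => Finset.sum_congr rfl fun _ _ => Finset.sum_comm
    _ = ∑ s, ∑ t, ∑ i, ∑ j, f i j s t := Finset.sum_congr rfl fun _ _ => Finset.sum_comm
    _ = ∑ s, ∑ t, ∑ j, ∑ i, f i j s t :=
        Finset.sum_congr rfl fun _ _ => Finset.sum_congr rfl fun _ _ => Finset.sum_comm

private lemma quad_XMat (a d : ℕ) (ρ : Matrix (Fin a × Fin d) (Fin a × Fin d) ℂ)
    (N : Matrix (Fin d) (Fin d) ℂ) (w : Fin a → ℂ) :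
    star w ⬝ᵥ (XMat a d ρ N) *ᵥ w
      = (((VMat a d w)ᴴ * ρ * VMat a d w) * N).trace := by
  simp only [Matrix.trace, Matrix.diag, Matrix.mul_apply, XMat, VMat, dotProduct, mulVec,
    Pi.star_apply, Matrix.of_apply, conjTranspose_apply, Fintype.sum_prod_type,
    apply_ite (star : ℂ → ℂ), star_zero, ite_mul, zero_mul, mul_ite, mul_zero,
    Finset.sum_ite_eq, Finset.sum_ite_eq', Finset.mem_univ, if_true,
    Finset.mul_sum, Finset.sum_mul]
  rw [sum4_comm]
  exact Finset.sum_congr rfl fun s _ => Finset.sum_congr rfl fun t _ =>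
    Finset.sum_congr rfl fun j _ => Finset.sum_congr rfl fun i _ => by ring

/-- Entanglement-assisted perfect single-shot discrimination of the two labelings
of a binary observable forces one of the effects to have nontrivial kernel. -/
theorem perfect_discrimination_forces_kernel (a d : ℕ)
    (ρ : Matrix (Fin a × Fin d) (Fin a × Fin d) ℂ)
    (hρ : ρ.PosSemidef) (hρtr : ρ.trace = 1)
    (F : Matrix (Fin a × Fin 2) (Fin a × Fin 2) ℂ) (hF : F.PosSemidef)
    (M₁ M₂ : Matrix (Fin d) (Fin d) ℂ)
    (h₁ : M₁.PosSemidef) (h₂ : M₂.PosSemidef) (hsum : M₁ + M₂ = 1)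
    (hsucc : (extMeasurePrepare a d ![M₁, M₂] ρ * F).trace = 1)
    (hfail : (extMeasurePrepare a d ![M₂, M₁] ρ * F).trace = 0) :
    ∃ φ : EuclideanSpace ℂ (Fin d), ‖φ‖ = 1 ∧
      (M₁.mulVec φ = 0 ∨ M₂.mulVec φ = 0) := by
  by_contra hcon
  push_neg at hcon
  -- injectivity of M₁ and M₂
  have hinj : ∀ (M : Matrix (Fin d) (Fin d) ℂ),
      (∀ φ : EuclideanSpace ℂ (Fin d), ‖φ‖ = 1 → M.mulVec φ ≠ 0) →
      ∀ v : Fin d → ℂ, M *ᵥ v = 0 → v = 0 := by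
    intro M hM v hv
    by_contra hv0
    set u : EuclideanSpace ℂ (Fin d) := (WithLp.equiv 2 (Fin d → ℂ)).symm v with hu
    have hvn : u ≠ 0 := fun h => hv0 (by simpa [hu] using h)
    have h0 : ‖u‖ ≠ 0 := norm_ne_zero_iff.mpr hvn
    set c : ℂ := ((‖u‖ : ℝ) : ℂ)⁻¹ with hc
    refine hM (c • u) ?_ ?_
    · rw [norm_smul, hc, ← Complex.ofReal_inv, Complex.norm_real, norm_inv, norm_norm]
      exact inv_mul_cancel₀ h0
    · show M *ᵥ (c • v) = 0
      rw [Matrix.mulVec_smul, hv, smul_zero]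
  have hinj1 : ∀ v : Fin d → ℂ, M₁ *ᵥ v = 0 → v = 0 :=
    hinj M₁ fun φ h => (hcon φ h).1
  have hinj2 : ∀ v : Fin d → ℂ, M₂ *ᵥ v = 0 → v = 0 :=
    hinj M₂ fun φ h => (hcon φ h).2
  -- quadratic form facts for XMat
  have hquad : ∀ (M : Matrix (Fin d) (Fin d) ℂ), M.PosSemidef →
      ∀ w, 0 ≤ star w ⬝ᵥ (XMat a d ρ M) *ᵥ w := by
    intro M hM w
    rw [quad_XMat]
    exact trace_nonneg' (hρ.conjTranspose_mul_mul_same _) hM.dotProduct_mulVec_nonneg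
  have hkey : ∀ (M M' : Matrix (Fin d) (Fin d) ℂ), M.PosSemidef →
      (∀ v, M *ᵥ v = 0 → v = 0) →
      ∀ w, star w ⬝ᵥ (XMat a d ρ M) *ᵥ w = 0 → star w ⬝ᵥ (XMat a d ρ M') *ᵥ w = 0 := by
    intro M M' hM hMinj w h
    rw [quad_XMat] at h ⊢
    rw [eq_zero_of_trace_mul (hρ.conjTranspose_mul_mul_same _) hM hMinj h, zero_mul,
      trace_zero]
  have hG : ∀ k, (GMat a F k).PosSemidef := fun k =>
    (GMat_eq a F k) ▸ hF.conjTranspose_mul_mul_same _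
  -- expand the two trace conditions
  rw [trace_formula, Fin.sum_univ_two] at hsucc hfail
  simp only [Matrix.cons_val_zero, Matrix.cons_val_one, Matrix.head_cons] at hsucc hfail
  -- the two failure terms vanish
  have n0 : 0 ≤ (XMat a d ρ M₂ * GMat a F 0).trace := by
    rw [trace_mul_comm]; exact trace_nonneg' (hG 0) (hquad M₂ h₂)
  have n1 : 0 ≤ (XMat a d ρ M₁ * GMat a F 1).trace := by
    rw [trace_mul_comm]; exact trace_nonneg' (hG 1) (hquad M₁ h₁)
  obtain ⟨hz0, hz1⟩ := (add_eq_zero_iff_of_nonneg n0 n1).mp hfail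
  -- transfer to the success terms
  have ht0 : (GMat a F 0 * XMat a d ρ M₁).trace = 0 :=
    trace_transfer (hG 0) (hquad M₂ h₂) (hkey M₂ M₁ h₂ hinj2)
      (by rw [trace_mul_comm]; exact hz0)
  have ht1 : (GMat a F 1 * XMat a d ρ M₂).trace = 0 :=
    trace_transfer (hG 1) (hquad M₁ h₁) (hkey M₁ M₂ h₁ hinj1)
      (by rw [trace_mul_comm]; exact hz1)
  rw [trace_mul_comm (XMat a d ρ M₁), ht0, trace_mul_comm (XMat a d ρ M₂), ht1,
    add_zero] at hsucc
  exact zero_ne_one hsucc
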